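/- Let n, m ≥ 0 and let A = ℚ[x_1,…,x_n,y_1,…,y_m]. Let I ⊂ A be the ideal generated by e_k(x_1,…,x_n) − e_k(1,…,n) for 1 ≤ k ≤ n, and let I' ⊂ A be the ideal generated by e_k(y_1,…,y_m) − e_k(1,…,m) for 1 ≤ k ≤ m, where e_k denotes the k-th elementary symmetric polynomial. Then (I + I')_0 = I_0 + I'_0, where for an ideal J ⊆ A, J_0 denotes the homogeneous ideal generated by the top-degree homogeneous parts of all elements of J. -/

import Mathlib

open MvPolynomial

/-- For an ideal `J`, the homogeneous ideal `J₀` generated by the top-degree homogeneous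
parts of all nonzero elements of `J`. -/
noncomputable def leadingForms {τ : Type*} (J : Ideal (MvPolynomial τ ℚ)) :
    Ideal (MvPolynomial τ ℚ) :=
  Ideal.span { g | ∃ f ∈ J, f ≠ 0 ∧ g = homogeneousComponent f.totalDegree f }

namespace LFAux

variable {σ τ : Type*}

/-- `Finsupp.sum` of the identity equals `Finsupp.degree`. -/
lemma degree_eq_sum (d : σ →₀ ℕ) : (d.sum fun _ e => e) = d.degree := rfl

lemma homogeneousComponent_totalDegree_ne_zero {p : MvPolynomial σ ℚ} (hp : p ≠ 0) :
    homogeneousComponent p.totalDegree p ≠ 0 := by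
  classical
  have hsupp : p.support.Nonempty := by
    rwa [Finset.nonempty_iff_ne_empty, ne_eq, MvPolynomial.support_eq_empty]
  obtain ⟨d, hd, hdeg⟩ := Finset.exists_mem_eq_sup p.support hsupp
    (fun s => s.sum fun _ e => e)
  intro h
  have : coeff d (homogeneousComponent p.totalDegree p) = coeff d p := by
    rw [coeff_homogeneousComponent, if_pos]
    rw [← degree_eq_sum, MvPolynomial.totalDegree, hdeg]
  rw [h] at this
  exact (MvPolynomial.mem_support_iff.mp hd) (by simpa using this.symm)

lemma totalDegree_eq_of_comp_ne_zero {p : MvPolynomial σ ℚ} {k : ℕ}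
    (h1 : p.totalDegree ≤ k) (h2 : homogeneousComponent k p ≠ 0) :
    p.totalDegree = k := by
  rcases lt_or_eq_of_le h1 with h | h
  · exact absurd (homogeneousComponent_eq_zero _ _ h) h2
  · exact h

lemma totalDegree_le_pred {p : MvPolynomial σ ℚ} {D : ℕ} (hD : 1 ≤ D)
    (h1 : p.totalDegree ≤ D) (h2 : homogeneousComponent D p = 0) :
    p.totalDegree ≤ D - 1 := by
  by_cases hp : p = 0
  · simp [hp]
  rcases lt_or_eq_of_le h1 with h | h
  · omega
  · exact absurd (h ▸ homogeneousComponent_totalDegree_ne_zero hp) (by simp [h2])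

lemma homogeneousComponent_of_isHomogeneous {p : MvPolynomial σ ℚ} {m n : ℕ}
    (h : p.IsHomogeneous n) :
    homogeneousComponent m p = if m = n then p else 0 :=
  homogeneousComponent_of_mem ((mem_homogeneousSubmodule _ _).mpr h)

/-- sum of homogeneous components up to any bound. -/
lemma sum_homogeneousComponent_of_le {p : MvPolynomial σ ℚ} {k : ℕ} (h : p.totalDegree ≤ k) :
    ∑ i ∈ Finset.range (k + 1), homogeneousComponent i p = p := by
  conv_rhs => rw [← sum_homogeneousComponent p]
  refine (Finset.sum_subset (Finset.range_subset_range.mpr (Nat.succ_le_succ h)) ?_).symm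
  intro i _ hi
  exact homogeneousComponent_eq_zero _ _ (by simp at hi; omega)

/-- homogeneous component of a product, top components multiply. -/
lemma homogeneousComponent_mul {p q : MvPolynomial σ ℚ} {a b : ℕ}
    (ha : p.totalDegree ≤ a) (hb : q.totalDegree ≤ b) :
    homogeneousComponent (a + b) (p * q) =
      homogeneousComponent a p * homogeneousComponent b q := by
  classical
  conv_lhs => rw [← sum_homogeneousComponent_of_le ha, ← sum_homogeneousComponent_of_le hb]
  rw [Finset.sum_mul_sum]
  rw [map_sum]
  rw [Finset.sum_eq_single a]
  · rw [map_sum, Finset.sum_eq_single b]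
    · rw [homogeneousComponent_of_isHomogeneous
        ((homogeneousComponent_isHomogeneous a p).mul (homogeneousComponent_isHomogeneous b q)),
        if_pos rfl]
    · intro j hj hjb
      rw [homogeneousComponent_of_isHomogeneous
        ((homogeneousComponent_isHomogeneous a p).mul (homogeneousComponent_isHomogeneous j q)),
        if_neg (by simp at hj; omega)]
    · intro h; exact absurd (by simp) h
  · intro i hi hia
    rw [map_sum, Finset.sum_eq_zero]
    intro j hj
    rw [homogeneousComponent_of_isHomogeneous
      ((homogeneousComponent_isHomogeneous i p).mul (homogeneousComponent_isHomogeneous j q)),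
      if_neg (by simp at hi hj; omega)]
  · intro h; exact absurd (by simp) h

lemma homogeneousComponent_monomial (d : σ →₀ ℕ) (r : ℚ) (k : ℕ) :
    homogeneousComponent k (monomial d r) =
      if d.degree = k then monomial d r else 0 := by
  classical
  ext e
  rw [coeff_homogeneousComponent]
  by_cases hed : e = d
  · subst hed
    by_cases h : e.degree = k
    · rw [if_pos h, if_pos h]
    · rw [if_neg h, if_neg h, coeff_zero]
  · have h0 : coeff e (monomial d r) = 0 := by rw [coeff_monomial]; exact if_neg (fun h => hed h.symm)
    rw [h0]
    split_ifs <;> simp [h0]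

lemma homogeneousComponent_rename (f : σ → τ)
    (p : MvPolynomial σ ℚ) (k : ℕ) :
    homogeneousComponent k (rename f p) = rename f (homogeneousComponent k p) := by
  induction p using MvPolynomial.induction_on' with
  | monomial d r =>
    rw [rename_monomial, homogeneousComponent_monomial, homogeneousComponent_monomial]
    have hdeg : (d.mapDomain f).degree = d.degree := by
      rw [← degree_eq_sum, ← degree_eq_sum]
      exact Finsupp.sum_mapDomain_index (fun _ => rfl) (fun _ _ _ => rfl)
    rw [hdeg]
    split_ifs <;> simp [rename_monomial]
  | add p q hp hq => simp [hp, hq]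


section Slice

variable (σ τ : Type*)

/-- The iso `ℚ[x,y] ≃ (ℚ[x])[y]`. -/
noncomputable def eA : MvPolynomial (σ ⊕ τ) ℚ ≃ₐ[ℚ] MvPolynomial τ (MvPolynomial σ ℚ) :=
  (renameEquiv ℚ (Equiv.sumComm σ τ)).trans (sumAlgEquiv ℚ τ σ)

variable {σ τ}

/-- The coefficient of `y^β` of a polynomial in `ℚ[x,y]`, an element of `ℚ[x]`. -/
noncomputable def sliceY (β : τ →₀ ℕ) (p : MvPolynomial (σ ⊕ τ) ℚ) : MvPolynomial σ ℚ :=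
  coeff β (eA σ τ p)

lemma eA_rename_inl (b : MvPolynomial σ ℚ) :
    eA σ τ (rename Sum.inl b) = C b := by
  have h : (eA σ τ).toAlgHom.comp (rename (Sum.inl : σ → σ ⊕ τ)) =
      (IsScalarTower.toAlgHom ℚ (MvPolynomial σ ℚ) (MvPolynomial τ (MvPolynomial σ ℚ))) := by
    ext i
    simp [eA]
  exact AlgHom.congr_fun h b

lemma eA_rename_inr (c : MvPolynomial τ ℚ) :
    eA σ τ (rename Sum.inr c) = map (C : ℚ →+* MvPolynomial σ ℚ) c := by
  have h : (eA σ τ).toAlgHom.comp (rename (Sum.inr : τ → σ ⊕ τ)) =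
      (MvPolynomial.mapAlgHom (Algebra.ofId ℚ (MvPolynomial σ ℚ))) := by
    ext i
    simp [eA, mapAlgHom_apply]
  have := AlgHom.congr_fun h c
  simpa [mapAlgHom_apply] using this

lemma sumElim_eq_mapDomain (d₁ : σ →₀ ℕ) (d₂ : τ →₀ ℕ) :
    Finsupp.sumElim d₁ d₂ =
      Finsupp.mapDomain Sum.inl d₁ + Finsupp.mapDomain Sum.inr d₂ := by
  classical
  ext x
  cases x with
  | inl a =>
    rw [Finsupp.sumElim_inl, Finsupp.add_apply,
      Finsupp.mapDomain_apply Sum.inl_injective,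
      Finsupp.mapDomain_notin_range _ _ (by simp), add_zero]
  | inr a =>
    rw [Finsupp.sumElim_inr, Finsupp.add_apply,
      Finsupp.mapDomain_apply Sum.inr_injective,
      Finsupp.mapDomain_notin_range _ _ (by simp), zero_add]

lemma degree_mapDomain {υ υ' : Type*} (f : υ → υ') (d : υ →₀ ℕ) :
    (Finsupp.mapDomain f d).degree = d.degree := by
  rw [← degree_eq_sum, ← degree_eq_sum]
  exact Finsupp.sum_mapDomain_index (fun _ => rfl) (fun _ _ _ => rfl)

lemma degree_sumElim (d₁ : σ →₀ ℕ) (d₂ : τ →₀ ℕ) :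
    (Finsupp.sumElim d₁ d₂).degree = d₁.degree + d₂.degree := by
  rw [sumElim_eq_mapDomain, ← degree_eq_sum,
    Finsupp.sum_add_index' (fun _ => rfl) (fun _ _ _ => rfl),
    degree_eq_sum, degree_eq_sum, degree_mapDomain, degree_mapDomain]

lemma sumElim_injective2 {a c : σ →₀ ℕ} {b d : τ →₀ ℕ}
    (h : Finsupp.sumElim a b = Finsupp.sumElim c d) : a = c ∧ b = d := by
  constructor
  · ext i; have := DFunLike.congr_fun h (Sum.inl i); simpa using this
  · ext j; have := DFunLike.congr_fun h (Sum.inr j); simpa using this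

lemma eA_monomial (d₁ : σ →₀ ℕ) (d₂ : τ →₀ ℕ) (r : ℚ) :
    eA σ τ (monomial (Finsupp.sumElim d₁ d₂) r) = monomial d₂ (monomial d₁ r) := by
  have : monomial (Finsupp.sumElim d₁ d₂) r =
      rename (Sum.inl : σ → σ ⊕ τ) (monomial d₁ r) *
        rename (Sum.inr : τ → σ ⊕ τ) (monomial d₂ 1) := by
    rw [rename_monomial, rename_monomial, monomial_mul, mul_one, sumElim_eq_mapDomain]
  rw [this, map_mul, eA_rename_inl, eA_rename_inr, map_monomial, map_one,
    C_mul_monomial, mul_one]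

lemma coeff_sliceY (α : σ →₀ ℕ) (β : τ →₀ ℕ) (p : MvPolynomial (σ ⊕ τ) ℚ) :
    coeff α (sliceY β p) = coeff (Finsupp.sumElim α β) p := by
  classical
  induction p using MvPolynomial.induction_on' with
  | monomial d r =>
    have hd : d = Finsupp.sumElim (Finsupp.sumFinsuppEquivProdFinsupp d).1
        (Finsupp.sumFinsuppEquivProdFinsupp d).2 :=
      (Finsupp.sumFinsuppEquivProdFinsupp.symm_apply_apply d).symm
    rw [hd, sliceY, eA_monomial, coeff_monomial, coeff_monomial]
    by_cases h2 : β = (Finsupp.sumFinsuppEquivProdFinsupp d).2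
    · subst h2
      rw [if_pos rfl, coeff_monomial]
      by_cases h1 : α = (Finsupp.sumFinsuppEquivProdFinsupp d).1
      · subst h1; rw [if_pos rfl, if_pos rfl]
      · rw [if_neg (fun h => h1 h.symm), if_neg (fun h => by
          obtain ⟨h1', _⟩ := sumElim_injective2 h; exact h1 h1'.symm)]
    · rw [if_neg (fun h => h2 h.symm), coeff_zero, if_neg (fun h => by
        obtain ⟨_, h2'⟩ := sumElim_injective2 h; exact h2 h2'.symm)]
  | add p q hp hq =>
    rw [sliceY] at hp hq ⊢
    rw [map_add, coeff_add, coeff_add, coeff_add, hp, hq]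

lemma sliceY_add (β : τ →₀ ℕ) (p q : MvPolynomial (σ ⊕ τ) ℚ) :
    sliceY β (p + q) = sliceY β p + sliceY β q := by
  rw [sliceY, sliceY, sliceY, map_add, coeff_add]

lemma sliceY_neg (β : τ →₀ ℕ) (p : MvPolynomial (σ ⊕ τ) ℚ) :
    sliceY β (-p) = -sliceY β p := by
  rw [sliceY, sliceY, map_neg, coeff_neg]

lemma sliceY_sub (β : τ →₀ ℕ) (p q : MvPolynomial (σ ⊕ τ) ℚ) :
    sliceY β (p - q) = sliceY β p - sliceY β q := by
  rw [sub_eq_add_neg, sliceY_add, sliceY_neg, sub_eq_add_neg]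

lemma sliceY_sum {ι : Type*} (s : Finset ι) (f : ι → MvPolynomial (σ ⊕ τ) ℚ)
    (β : τ →₀ ℕ) : sliceY β (∑ i ∈ s, f i) = ∑ i ∈ s, sliceY β (f i) := by
  classical
  induction s using Finset.induction_on with
  | empty => simp [sliceY]
  | insert _ _ hne ih => rw [Finset.sum_insert hne, Finset.sum_insert hne, sliceY_add, ih]

lemma eq_zero_of_sliceY (p : MvPolynomial (σ ⊕ τ) ℚ)
    (h : ∀ β, sliceY β p = 0) : p = 0 := by
  have : eA σ τ p = 0 := MvPolynomial.ext _ _ (fun β => by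
    simpa [sliceY] using h β)
  have := congrArg (eA σ τ).symm this
  simpa using this


lemma sliceY_totalDegree_le {p : MvPolynomial (σ ⊕ τ) ℚ} {β : τ →₀ ℕ}
    (h : sliceY β p ≠ 0) :
    (sliceY β p).totalDegree + β.degree ≤ p.totalDegree := by
  have hsupp : (sliceY β p).support.Nonempty := by
    rwa [Finset.nonempty_iff_ne_empty, ne_eq, MvPolynomial.support_eq_empty]
  obtain ⟨α, hα, hdeg⟩ := Finset.exists_mem_eq_sup (sliceY β p).support hsupp
    (fun s => s.sum fun _ e => e)
  have hc : coeff (Finsupp.sumElim α β) p ≠ 0 := by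
    rw [← coeff_sliceY]
    exact MvPolynomial.mem_support_iff.mp hα
  have hmem := le_totalDegree (MvPolynomial.mem_support_iff.mpr hc)
  rw [degree_eq_sum, degree_sumElim] at hmem
  rw [MvPolynomial.totalDegree, hdeg, degree_eq_sum]
  exact hmem

variable (σ) in
/-- The monomial `y^β` in `ℚ[x,y]`. -/
noncomputable def Ymon (β : τ →₀ ℕ) : MvPolynomial (σ ⊕ τ) ℚ :=
  rename Sum.inr (monomial β 1)

lemma eA_Ymon (β : τ →₀ ℕ) : eA σ τ (Ymon σ β) = monomial β 1 := by
  rw [Ymon, eA_rename_inr, map_monomial]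
  simp

open Classical in
lemma sliceY_inl_mul_Ymon (b : MvPolynomial σ ℚ) (β γ : τ →₀ ℕ) :
    sliceY β (rename Sum.inl b * Ymon σ γ) = if γ = β then b else 0 := by
  rw [sliceY, map_mul, eA_rename_inl, eA_Ymon, coeff_C_mul, coeff_monomial]
  split_ifs <;> simp

lemma sliceY_inl_mul_inr (b : MvPolynomial σ ℚ) (c : MvPolynomial τ ℚ) (β : τ →₀ ℕ) :
    sliceY β (rename Sum.inl b * rename Sum.inr c) = C (coeff β c) * b := by
  rw [sliceY, map_mul, eA_rename_inl, eA_rename_inr, coeff_C_mul, coeff_map, mul_comm]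

lemma sliceY_decomp (p : MvPolynomial (σ ⊕ τ) ℚ) :
    p = ∑ β ∈ (eA σ τ p).support, rename Sum.inl (sliceY β p) * Ymon σ β := by
  apply (eA σ τ).injective
  rw [map_sum]
  have hterm : ∀ β ∈ (eA σ τ p).support,
      eA σ τ (rename Sum.inl (sliceY β p) * Ymon σ β)
        = monomial β (coeff β (eA σ τ p)) := by
    intro β _
    rw [map_mul, eA_rename_inl, eA_Ymon, C_mul_monomial, mul_one, sliceY]
  rw [Finset.sum_congr rfl hterm, support_sum_monomial_coeff]

lemma map_ringEquiv_eq {R S : Type*} [CommRing R] [CommRing S] (e : R ≃+* S)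
    (J : Ideal R) : Ideal.map e J = Ideal.map (e : R →+* S) J := rfl

lemma map_eA_map_inl (I : Ideal (MvPolynomial σ ℚ)) :
    Ideal.map ((eA σ τ).toRingEquiv : MvPolynomial (σ ⊕ τ) ℚ →+* _)
        (Ideal.map (rename (Sum.inl : σ → σ ⊕ τ)).toRingHom I)
      = Ideal.map (C : MvPolynomial σ ℚ →+* MvPolynomial τ (MvPolynomial σ ℚ)) I := by
  rw [Ideal.map_map]
  congr 1
  apply MvPolynomial.ringHom_ext
  · intro a
    have : (rename (Sum.inl : σ → σ ⊕ τ)) (C a) = C a := by simp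
    simp only [RingHom.comp_apply, AlgHom.toRingHom_eq_coe, RingHom.coe_coe, this]
    have h2 := eA_rename_inl (τ := τ) (C a : MvPolynomial σ ℚ)
    simpa using h2
  · intro i
    have h2 := eA_rename_inl (τ := τ) (X i : MvPolynomial σ ℚ)
    simpa using h2

lemma mem_map_inl_iff (I : Ideal (MvPolynomial σ ℚ)) (p : MvPolynomial (σ ⊕ τ) ℚ) :
    p ∈ Ideal.map (rename (Sum.inl : σ → σ ⊕ τ)).toRingHom I ↔ ∀ β, sliceY β p ∈ I := by
  rw [← Ideal.apply_mem_of_equiv_iff (f := (eA σ τ).toRingEquiv)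
    (x := p) (I := Ideal.map (rename (Sum.inl : σ → σ ⊕ τ)).toRingHom I),
    map_ringEquiv_eq, map_eA_map_inl, MvPolynomial.mem_map_C_iff]
  rfl

end Slice

section TopForms

variable {σ τ : Type*}

/-- The space of top-degree forms (of degree `e`) of elements of `I`, together with `0`. -/
noncomputable def TopForms (I : Ideal (MvPolynomial σ ℚ)) (e : ℕ) :
    Submodule ℚ (MvPolynomial σ ℚ) where
  carrier := {b | b = 0 ∨ ∃ u ∈ I, u ≠ 0 ∧ u.totalDegree = e ∧
    b = homogeneousComponent e u}
  zero_mem' := Or.inl rfl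
  add_mem' := by
    rintro a b (rfl | ⟨u, hu, hu0, hud, rfl⟩)
    · simp
    rintro (rfl | ⟨v, hv, hv0, hvd, rfl⟩)
    · simp
      exact Or.inr ⟨u, hu, hu0, hud, rfl⟩
    by_cases hs : homogeneousComponent e u + homogeneousComponent e v = 0
    · exact Or.inl hs
    right
    refine ⟨u + v, Ideal.add_mem _ hu hv, ?_, ?_, by rw [map_add]⟩
    · intro h; exact hs (by rw [← map_add, h, map_zero])
    · refine totalDegree_eq_of_comp_ne_zero ?_ (by rwa [map_add])
      exact (totalDegree_add u v).trans (by omega)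
  smul_mem' := by
    rintro c b (rfl | ⟨u, hu, hu0, hud, rfl⟩)
    · exact Or.inl (smul_zero c)
    by_cases hc : c = 0
    · exact Or.inl (by rw [hc, zero_smul])
    right
    have hcu : c • u ≠ 0 := fun h => hu0 (by
      rw [← one_smul ℚ u, ← inv_mul_cancel₀ hc, mul_smul, h, smul_zero])
    refine ⟨c • u, ?_, hcu, ?_, by rw [map_smul]⟩
    · rw [smul_eq_C_mul]; exact Ideal.mul_mem_left _ _ hu
    · refine le_antisymm ((totalDegree_smul_le c u).trans hud.le) ?_
      have huu : u = c⁻¹ • (c • u) := by rw [smul_smul, inv_mul_cancel₀ hc, one_smul]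
      rw [← hud]
      conv_lhs => rw [huu]
      exact totalDegree_smul_le _ _

lemma mem_TopForms_iff {I : Ideal (MvPolynomial σ ℚ)} {e : ℕ} {b : MvPolynomial σ ℚ} :
    b ∈ TopForms I e ↔ b = 0 ∨ ∃ u ∈ I, u ≠ 0 ∧ u.totalDegree = e ∧
      b = homogeneousComponent e u := Iff.rfl

lemma TopForms_isHomogeneous {I : Ideal (MvPolynomial σ ℚ)} {e : ℕ}
    {b : MvPolynomial σ ℚ} (hb : b ∈ TopForms I e) : b.IsHomogeneous e := by
  rcases hb with rfl | ⟨u, _, _, _, rfl⟩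
  · exact isHomogeneous_zero _ _ _
  · exact homogeneousComponent_isHomogeneous _ _

lemma comp_mem_TopForms {I : Ideal (MvPolynomial σ ℚ)} {e : ℕ}
    {u : MvPolynomial σ ℚ} (hu : u ∈ I) (hd : u.totalDegree ≤ e) :
    homogeneousComponent e u ∈ TopForms I e := by
  by_cases hu0 : u = 0
  · rw [hu0, map_zero]; exact zero_mem _
  rcases lt_or_eq_of_le hd with h | h
  · rw [homogeneousComponent_eq_zero _ _ h]; exact zero_mem _
  · exact Or.inr ⟨u, hu, hu0, h, rfl⟩

lemma Ymon_isHomogeneous (β : τ →₀ ℕ) :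
    (Ymon σ β).IsHomogeneous β.degree := by
  rw [Ymon, rename_monomial]
  exact isHomogeneous_monomial _ (degree_mapDomain _ _)

lemma Ymon_totalDegree_le (β : τ →₀ ℕ) : (Ymon σ β).totalDegree ≤ β.degree :=
  (Ymon_isHomogeneous β).totalDegree_le

lemma Ymon_ne_zero (β : τ →₀ ℕ) : (Ymon σ β : MvPolynomial (σ ⊕ τ) ℚ) ≠ 0 := by
  rw [Ymon, rename_monomial]
  simp [MvPolynomial.monomial_eq_zero]

lemma comp_inl_mul_Ymon {b : MvPolynomial σ ℚ} {a : ℕ} (β : τ →₀ ℕ)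
    (hb : b.totalDegree ≤ a) :
    homogeneousComponent (a + β.degree) (rename Sum.inl b * Ymon σ β)
      = rename Sum.inl (homogeneousComponent a b) * Ymon σ β := by
  have h1 : (rename (Sum.inl : σ → σ ⊕ τ) b).totalDegree ≤ a :=
    (totalDegree_rename_le _ _).trans hb
  rw [homogeneousComponent_mul h1 (Ymon_totalDegree_le β),
    homogeneousComponent_rename,
    homogeneousComponent_of_isHomogeneous (Ymon_isHomogeneous β), if_pos rfl]

lemma homogeneousComponent_eq_sum {p : MvPolynomial (σ ⊕ τ) ℚ} {k : ℕ}
    (hk : p.totalDegree ≤ k) :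
    homogeneousComponent k p = ∑ β ∈ (eA σ τ p).support,
      rename Sum.inl (homogeneousComponent (k - β.degree) (sliceY β p)) * Ymon σ β := by
  conv_lhs => rw [sliceY_decomp p]
  rw [map_sum]
  refine Finset.sum_congr rfl ?_
  intro β hβ
  have hsl : sliceY β p ≠ 0 := MvPolynomial.mem_support_iff.mp hβ
  have hd := sliceY_totalDegree_le hsl
  have hβk : β.degree ≤ k := le_trans (le_trans (Nat.le_add_left _ _) hd) hk
  have := comp_inl_mul_Ymon (σ := σ) β (Nat.le_sub_of_add_le (hd.trans hk))
    (b := sliceY β p)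
  rwa [Nat.sub_add_cancel hβk] at this

open Classical in
lemma sliceY_homogeneousComponent_mem {I : Ideal (MvPolynomial σ ℚ)}
    {p : MvPolynomial (σ ⊕ τ) ℚ} {k : ℕ}
    (hp : ∀ β, sliceY β p ∈ I) (hk : p.totalDegree ≤ k) (γ : τ →₀ ℕ) :
    sliceY γ (homogeneousComponent k p) ∈ TopForms I (k - γ.degree) := by
  rw [homogeneousComponent_eq_sum hk, sliceY_sum]
  have hterm : ∀ β ∈ (eA σ τ p).support,
      sliceY γ (rename Sum.inl (homogeneousComponent (k - β.degree) (sliceY β p)) * Ymon σ β)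
        = if β = γ then homogeneousComponent (k - β.degree) (sliceY β p) else 0 := by
    intro β _
    rw [sliceY_inl_mul_Ymon]
  rw [Finset.sum_congr rfl hterm, Finset.sum_ite_eq' _ γ
    (fun β => homogeneousComponent (k - β.degree) (sliceY β p))]
  split_ifs with hγ
  · refine comp_mem_TopForms (hp γ) ?_
    have hsl : sliceY γ p ≠ 0 := MvPolynomial.mem_support_iff.mp hγ
    exact Nat.le_sub_of_add_le ((sliceY_totalDegree_le hsl).trans hk)
  · exact zero_mem _

lemma homogeneousComponent_mem_leadingForms {I : Ideal (MvPolynomial σ ℚ)}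
    {p : MvPolynomial (σ ⊕ τ) ℚ} {k : ℕ}
    (hp : p ∈ Ideal.map (rename (Sum.inl : σ → σ ⊕ τ)).toRingHom I)
    (hk : p.totalDegree ≤ k) :
    homogeneousComponent k p
      ∈ leadingForms (Ideal.map (rename (Sum.inl : σ → σ ⊕ τ)).toRingHom I) := by
  rw [homogeneousComponent_eq_sum hk]
  refine Submodule.sum_mem _ ?_
  intro β hβ
  have hw : sliceY β p ∈ I := (mem_map_inl_iff I p).mp hp β
  have hsl : sliceY β p ≠ 0 := MvPolynomial.mem_support_iff.mp hβ
  have hd := sliceY_totalDegree_le (p := p) (β := β) hsl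
  by_cases hc : homogeneousComponent (k - β.degree) (sliceY β p) = 0
  · rw [hc, map_zero, zero_mul]; exact zero_mem _
  have hdeg : (sliceY β p).totalDegree = k - β.degree :=
    totalDegree_eq_of_comp_ne_zero (Nat.le_sub_of_add_le (hd.trans hk)) hc
  have hβk : β.degree ≤ k := le_trans (le_trans (Nat.le_add_left _ _) hd) hk
  set F := rename (Sum.inl : σ → σ ⊕ τ) (sliceY β p) * Ymon σ β with hF
  have hFmem : F ∈ Ideal.map (rename (Sum.inl : σ → σ ⊕ τ)).toRingHom I :=
    Ideal.mul_mem_right _ _ (Ideal.mem_map_of_mem _ hw)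
  have hcomp : homogeneousComponent ((k - β.degree) + β.degree) F
      = rename Sum.inl (homogeneousComponent (k - β.degree) (sliceY β p)) * Ymon σ β :=
    comp_inl_mul_Ymon β hdeg.le
  have hne : rename (Sum.inl : σ → σ ⊕ τ) (homogeneousComponent (k - β.degree) (sliceY β p))
      * Ymon σ β ≠ 0 := by
    refine mul_ne_zero ?_ (Ymon_ne_zero β)
    intro h
    exact hc (rename_injective _ Sum.inl_injective (by simpa using h))
  have hF0 : F ≠ 0 := by
    intro h
    rw [h, map_zero] at hcomp
    exact hne hcomp.symm
  have hdF : F.totalDegree = (k - β.degree) + β.degree := by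
    refine le_antisymm ?_ (not_lt.mp (fun hlt => hne
      ((hcomp.symm.trans (homogeneousComponent_eq_zero _ _ hlt)))))
    exact (totalDegree_mul _ _).trans (add_le_add
      ((totalDegree_rename_le _ _).trans hdeg.le) (Ymon_totalDegree_le β))
  exact Ideal.subset_span ⟨F, hFmem, hF0, by rw [hdF, hcomp]⟩

lemma lift_pair {I : Ideal (MvPolynomial σ ℚ)} {I' : Ideal (MvPolynomial τ ℚ)}
    {φ : MvPolynomial σ ℚ} {ψ : MvPolynomial τ ℚ} {a b : ℕ}
    (hφ : φ ∈ TopForms I a) (hψ : ψ ∈ TopForms I' b) :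
    ∃ w : MvPolynomial (σ ⊕ τ) ℚ,
      w ∈ Ideal.map (rename (Sum.inl : σ → σ ⊕ τ)).toRingHom I ∧
      w ∈ Ideal.map (rename (Sum.inr : τ → σ ⊕ τ)).toRingHom I' ∧
      w.totalDegree ≤ a + b ∧
      homogeneousComponent (a + b) w = rename Sum.inl φ * rename Sum.inr ψ := by
  rcases hφ with rfl | ⟨u, hu, hu0, hud, rfl⟩
  · exact ⟨0, zero_mem _, zero_mem _, by simp, by simp⟩
  rcases hψ with rfl | ⟨v, hv, hv0, hvd, rfl⟩
  · exact ⟨0, zero_mem _, zero_mem _, by simp, by simp⟩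
  refine ⟨rename Sum.inl u * rename Sum.inr v, ?_, ?_, ?_, ?_⟩
  · exact Ideal.mul_mem_right _ _ (Ideal.mem_map_of_mem _ hu)
  · exact Ideal.mul_mem_left _ _ (Ideal.mem_map_of_mem _ hv)
  · exact (totalDegree_mul _ _).trans (add_le_add
      ((totalDegree_rename_le _ _).trans hud.le) ((totalDegree_rename_le _ _).trans hvd.le))
  · rw [homogeneousComponent_mul ((totalDegree_rename_le _ _).trans hud.le)
      ((totalDegree_rename_le _ _).trans hvd.le),
      homogeneousComponent_rename, homogeneousComponent_rename]

end TopForms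

section Swap

variable {σ τ : Type*}

variable (σ τ) in
/-- Swapping the two groups of variables. -/
noncomputable def sw : MvPolynomial (σ ⊕ τ) ℚ ≃ₐ[ℚ] MvPolynomial (τ ⊕ σ) ℚ :=
  renameEquiv ℚ (Equiv.sumComm σ τ)

lemma sw_symm : (sw σ τ).symm = sw τ σ := by
  rw [sw, sw, renameEquiv_symm, Equiv.sumComm_symm]

lemma sw_sw (p : MvPolynomial (σ ⊕ τ) ℚ) : sw τ σ (sw σ τ p) = p := by
  rw [← sw_symm]
  exact AlgEquiv.symm_apply_apply _ _

lemma sw_totalDegree (p : MvPolynomial (σ ⊕ τ) ℚ) :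
    (sw σ τ p).totalDegree = p.totalDegree := by
  refine le_antisymm ?_ ?_
  · rw [sw, renameEquiv_apply]
    exact totalDegree_rename_le _ _
  · conv_lhs => rw [show p = sw τ σ (sw σ τ p) from (sw_sw p).symm]
    rw [sw, renameEquiv_apply]
    exact totalDegree_rename_le _ _

lemma sw_comp (k : ℕ) (p : MvPolynomial (σ ⊕ τ) ℚ) :
    homogeneousComponent k (sw σ τ p) = sw σ τ (homogeneousComponent k p) := by
  rw [sw, renameEquiv_apply, renameEquiv_apply]
  exact homogeneousComponent_rename _ p k

lemma sw_rename_inl (b : MvPolynomial σ ℚ) :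
    sw σ τ (rename Sum.inl b) = rename Sum.inr b := by
  rw [sw, renameEquiv_apply, rename_rename]
  have : (⇑(Equiv.sumComm σ τ)) ∘ (Sum.inl : σ → σ ⊕ τ) = Sum.inr := by
    funext x; rfl
  rw [this]

lemma sw_rename_inr (c : MvPolynomial τ ℚ) :
    sw σ τ (rename Sum.inr c) = rename Sum.inl c := by
  rw [sw, renameEquiv_apply, rename_rename]
  have : (⇑(Equiv.sumComm σ τ)) ∘ (Sum.inr : τ → σ ⊕ τ) = Sum.inl := by
    funext x; rfl
  rw [this]

lemma sw_comp_inr (I' : Ideal (MvPolynomial τ ℚ)) :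
    Ideal.map ((sw σ τ).toRingEquiv : MvPolynomial (σ ⊕ τ) ℚ →+* MvPolynomial (τ ⊕ σ) ℚ)
        (Ideal.map (rename (Sum.inr : τ → σ ⊕ τ)).toRingHom I')
      = Ideal.map (rename (Sum.inl : τ → τ ⊕ σ)).toRingHom I' := by
  rw [Ideal.map_map]
  congr 1
  apply MvPolynomial.ringHom_ext
  · intro a
    simp [sw]
  · intro i
    have h := sw_rename_inr (σ := σ) (τ := τ) (X i)
    simpa using h

lemma mem_map_inr_iff_sw (I' : Ideal (MvPolynomial τ ℚ)) (q : MvPolynomial (σ ⊕ τ) ℚ) :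
    q ∈ Ideal.map (rename (Sum.inr : τ → σ ⊕ τ)).toRingHom I' ↔
      sw σ τ q ∈ Ideal.map (rename (Sum.inl : τ → τ ⊕ σ)).toRingHom I' := by
  rw [← sw_comp_inr (σ := σ) I', ← map_ringEquiv_eq]
  exact (Ideal.apply_mem_of_equiv_iff (f := (sw σ τ).toRingEquiv)).symm

lemma genSet_map_sw (J : Ideal (MvPolynomial (σ ⊕ τ) ℚ)) :
    {g | ∃ f ∈ Ideal.map ((sw σ τ).toRingEquiv :
        MvPolynomial (σ ⊕ τ) ℚ →+* MvPolynomial (τ ⊕ σ) ℚ) J,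
      f ≠ 0 ∧ g = homogeneousComponent f.totalDegree f}
      = (sw σ τ) '' {g | ∃ f ∈ J, f ≠ 0 ∧ g = homogeneousComponent f.totalDegree f} := by
  ext g
  constructor
  · rintro ⟨f, hf, h0, rfl⟩
    rw [← map_ringEquiv_eq] at hf
    obtain ⟨f₀, hf₀, rfl⟩ := (Ideal.mem_map_of_equiv _ f).mp hf
    refine ⟨homogeneousComponent f₀.totalDegree f₀, ⟨f₀, hf₀, ?_, rfl⟩, ?_⟩
    · intro h; rw [h] at h0; exact h0 (map_zero _)
    · show sw σ τ _ = _
      simp only [show ∀ x, (sw σ τ).toRingEquiv x = sw σ τ x from fun _ => rfl]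
      rw [sw_totalDegree, sw_comp]
  · rintro ⟨g₀, ⟨f, hf, h0, rfl⟩, rfl⟩
    refine ⟨sw σ τ f, Ideal.mem_map_of_mem _ hf, ?_, ?_⟩
    · intro h
      exact h0 (by rw [← sw_sw f, h, map_zero])
    · show sw σ τ _ = homogeneousComponent (sw σ τ f).totalDegree (sw σ τ f)
      rw [sw_totalDegree, sw_comp]

lemma leadingForms_map_sw (J : Ideal (MvPolynomial (σ ⊕ τ) ℚ)) :
    leadingForms (Ideal.map ((sw σ τ).toRingEquiv :
        MvPolynomial (σ ⊕ τ) ℚ →+* MvPolynomial (τ ⊕ σ) ℚ) J)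
      = Ideal.map ((sw σ τ).toRingEquiv :
        MvPolynomial (σ ⊕ τ) ℚ →+* MvPolynomial (τ ⊕ σ) ℚ) (leadingForms J) := by
  rw [leadingForms, leadingForms, Ideal.map_span, genSet_map_sw]
  rfl

lemma homogeneousComponent_mem_leadingForms_inr {I' : Ideal (MvPolynomial τ ℚ)}
    {q : MvPolynomial (σ ⊕ τ) ℚ} {k : ℕ}
    (hq : q ∈ Ideal.map (rename (Sum.inr : τ → σ ⊕ τ)).toRingHom I')
    (hk : q.totalDegree ≤ k) :
    homogeneousComponent k q
      ∈ leadingForms (Ideal.map (rename (Sum.inr : τ → σ ⊕ τ)).toRingHom I') := by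
  have h1 : homogeneousComponent k (sw σ τ q)
      ∈ leadingForms (Ideal.map (rename (Sum.inl : τ → τ ⊕ σ)).toRingHom I') :=
    homogeneousComponent_mem_leadingForms ((mem_map_inr_iff_sw I' q).mp hq)
      (by rw [sw_totalDegree]; exact hk)
  rw [← sw_comp_inr (σ := σ) I', leadingForms_map_sw, sw_comp] at h1
  rw [← map_ringEquiv_eq] at h1
  exact (Ideal.apply_mem_of_equiv_iff (f := (sw σ τ).toRingEquiv)).mp h1

end Swap

section Lift2

variable {σ τ : Type*}

/-- The coefficient of `x^α`, an element of `ℚ[y]`. -/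
noncomputable def sliceX (α : σ →₀ ℕ) (p : MvPolynomial (σ ⊕ τ) ℚ) : MvPolynomial τ ℚ :=
  sliceY α (sw σ τ p)

lemma sliceX_inl_mul_inr (b : MvPolynomial σ ℚ) (c : MvPolynomial τ ℚ) (α : σ →₀ ℕ) :
    sliceX α (rename Sum.inl b * rename Sum.inr c) = C (coeff α b) * c := by
  rw [sliceX, map_mul, sw_rename_inl, sw_rename_inr, mul_comm, sliceY_inl_mul_inr]

lemma exists_proj (I : Ideal (MvPolynomial σ ℚ)) (e : ℕ) :
    ∃ π : MvPolynomial σ ℚ →ₗ[ℚ] MvPolynomial σ ℚ,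
      (∀ b, π b ∈ TopForms I e) ∧ (∀ b ∈ TopForms I e, π b = b) := by
  obtain ⟨K, hK⟩ := Submodule.exists_isCompl (TopForms I e)
  refine ⟨(TopForms I e).subtype.comp (Submodule.projectionOnto _ _ hK),
    fun b => Submodule.coe_mem _, fun b hb => ?_⟩
  show ((Submodule.projectionOnto _ _ hK b : TopForms I e) : MvPolynomial σ ℚ) = b
  rw [show b = ((⟨b, hb⟩ : TopForms I e) : MvPolynomial σ ℚ) from rfl,
    Submodule.projectionOnto_apply_left hK ⟨b, hb⟩]

lemma lift2 {I : Ideal (MvPolynomial σ ℚ)} {I' : Ideal (MvPolynomial τ ℚ)}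
    {D : ℕ} {p q : MvPolynomial (σ ⊕ τ) ℚ}
    (hp : p ∈ Ideal.map (rename (Sum.inl : σ → σ ⊕ τ)).toRingHom I)
    (hq : q ∈ Ideal.map (rename (Sum.inr : τ → σ ⊕ τ)).toRingHom I')
    (hdp : p.totalDegree ≤ D) (hdq : q.totalDegree ≤ D)
    (hsum : homogeneousComponent D p + homogeneousComponent D q = 0) :
    ∃ G, G ∈ Ideal.map (rename (Sum.inl : σ → σ ⊕ τ)).toRingHom I ∧
      G ∈ Ideal.map (rename (Sum.inr : τ → σ ⊕ τ)).toRingHom I' ∧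
      G.totalDegree ≤ D ∧ homogeneousComponent D G = homogeneousComponent D p := by
  classical
  set g := homogeneousComponent D p with hgdef
  have hgdeg : g.totalDegree ≤ D := (homogeneousComponent_isHomogeneous D p).totalDegree_le
  have hgp : g = - homogeneousComponent D q := by
    rw [eq_neg_iff_add_eq_zero]; exact hsum
  -- rows
  have hrow : ∀ β, sliceY β g ∈ TopForms I (D - β.degree) :=
    fun β => sliceY_homogeneousComponent_mem ((mem_map_inl_iff I p).mp hp) hdp β
  -- columns
  have hswq : ∀ α, sliceY α (sw σ τ q) ∈ I' :=
    (mem_map_inl_iff I' (sw σ τ q)).mp ((mem_map_inr_iff_sw I' q).mp hq)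
  have hcol : ∀ α, sliceX α g ∈ TopForms I' (D - α.degree) := by
    intro α
    have h1 : sliceY α (homogeneousComponent D (sw σ τ q)) ∈ TopForms I' (D - α.degree) :=
      sliceY_homogeneousComponent_mem hswq (by rw [sw_totalDegree]; exact hdq) α
    have h2 : sliceX α g = - sliceY α (homogeneousComponent D (sw σ τ q)) := by
      rw [sliceX, hgp, map_neg, sliceY_neg, sw_comp]
    rw [h2]
    exact neg_mem h1
  -- support of the x-monomial decomposition
  set SX := (eA τ σ (sw σ τ g)).support with hSXdef
  have hαD : ∀ α ∈ SX, α.degree ≤ D := by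
    intro α hα
    have hne : sliceY α (sw σ τ g) ≠ 0 := MvPolynomial.mem_support_iff.mp hα
    have h1 := sliceY_totalDegree_le hne
    rw [sw_totalDegree] at h1
    omega
  have hdecomp : g = ∑ α ∈ SX,
      rename Sum.inl (monomial α (1 : ℚ)) * rename Sum.inr (sliceX α g) := by
    have h0 := sliceY_decomp (sw σ τ g)
    have h1 := congrArg (sw τ σ) h0
    rw [sw_sw, map_sum] at h1
    nth_rewrite 1 [h1]
    refine Finset.sum_congr rfl fun α _ => ?_
    rw [map_mul, sw_rename_inl, show Ymon τ α = rename Sum.inr (monomial α 1) from rfl,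
      sw_rename_inr, mul_comm, show sliceY α (sw σ τ g) = sliceX α g from rfl]
  -- projections onto top-forms spaces
  choose π hπT hπid using exists_proj I
  have hπ0 : ∀ e b, π e (b - π e b) = 0 := by
    intro e b
    rw [map_sub, hπid e _ (hπT e b), sub_self]
  -- the rewriting of g with projected x-monomials
  have hgg' : g = ∑ α ∈ SX,
      rename Sum.inl (π α.degree (monomial α 1)) * rename Sum.inr (sliceX α g) := by
    rw [← sub_eq_zero]
    apply eq_zero_of_sliceY
    intro β
    set e := D - β.degree with hedef
    have hkey : ∀ α ∈ SX, coeff β (sliceX α g) ≠ 0 → α.degree = e := by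
      intro α hα hcoeff
      have hhom := TopForms_isHomogeneous (hcol α)
      have hβdeg : β.degree = D - α.degree := by
        by_contra hne
        exact hcoeff (hhom.coeff_eq_zero hne)
      have := hαD α hα
      omega
    have hterm : g - (∑ α ∈ SX,
        rename Sum.inl (π α.degree (monomial α 1)) * rename Sum.inr (sliceX α g))
        = ∑ α ∈ SX, rename Sum.inl (monomial α 1 - π α.degree (monomial α 1))
            * rename Sum.inr (sliceX α g) := by
      nth_rewrite 1 [hdecomp]
      rw [← Finset.sum_sub_distrib]
      refine Finset.sum_congr rfl fun α _ => ?_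
      rw [map_sub, sub_mul]
    rw [hterm]
    have hslice : sliceY β (∑ α ∈ SX,
        rename Sum.inl (monomial α 1 - π α.degree (monomial α 1))
          * rename Sum.inr (sliceX α g))
        = ∑ α ∈ SX, C (coeff β (sliceX α g))
            * (monomial α 1 - π α.degree (monomial α 1)) := by
      rw [sliceY_sum]
      exact Finset.sum_congr rfl fun α _ => sliceY_inl_mul_inr _ _ _
    have hmemT : sliceY β (∑ α ∈ SX,
        rename Sum.inl (monomial α 1 - π α.degree (monomial α 1))
          * rename Sum.inr (sliceX α g)) ∈ TopForms I e := by
      have h1 : sliceY β (∑ α ∈ SX,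
          rename Sum.inl (monomial α 1 - π α.degree (monomial α 1))
            * rename Sum.inr (sliceX α g)) = sliceY β g - ∑ α ∈ SX,
          C (coeff β (sliceX α g)) * π α.degree (monomial α 1) := by
        rw [hslice]
        nth_rewrite 2 [hdecomp]
        rw [sliceY_sum, ← Finset.sum_sub_distrib]
        refine Finset.sum_congr rfl fun α _ => ?_
        rw [sliceY_inl_mul_inr, mul_sub]
      rw [h1]
      refine sub_mem (hrow β) (Submodule.sum_mem _ ?_)
      intro α hα
      by_cases hc : coeff β (sliceX α g) = 0
      · rw [hc]; simp
      · rw [hkey α hα hc, ← smul_eq_C_mul]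
        exact Submodule.smul_mem _ _ (hπT e _)
    have hπzero : π e (sliceY β (∑ α ∈ SX,
        rename Sum.inl (monomial α 1 - π α.degree (monomial α 1))
          * rename Sum.inr (sliceX α g))) = 0 := by
      rw [hslice, map_sum]
      refine Finset.sum_eq_zero ?_
      intro α hα
      by_cases hc : coeff β (sliceX α g) = 0
      · rw [hc]; simp
      · rw [← smul_eq_C_mul, map_smul, hkey α hα hc, hπ0, smul_zero]
    rw [← hπid e _ hmemT, hπzero]
  -- lift each summand
  have hlift : ∀ α ∈ SX, ∃ w,
      w ∈ Ideal.map (rename (Sum.inl : σ → σ ⊕ τ)).toRingHom I ∧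
      w ∈ Ideal.map (rename (Sum.inr : τ → σ ⊕ τ)).toRingHom I' ∧
      w.totalDegree ≤ D ∧
      homogeneousComponent D w =
        rename Sum.inl (π α.degree (monomial α 1)) * rename Sum.inr (sliceX α g) := by
    intro α hα
    obtain ⟨w, h1, h2, h3, h4⟩ := lift_pair (hπT α.degree (monomial α 1)) (hcol α)
    rw [Nat.add_sub_cancel' (hαD α hα)] at h3 h4
    exact ⟨w, h1, h2, h3, h4⟩
  choose w hw1 hw2 hw3 hw4 using hlift
  refine ⟨∑ α ∈ SX.attach, w α.1 α.2, ?_, ?_, ?_, ?_⟩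
  · exact Submodule.sum_mem _ fun α _ => hw1 α.1 α.2
  · exact Submodule.sum_mem _ fun α _ => hw2 α.1 α.2
  · exact (totalDegree_finset_sum _ _).trans (Finset.sup_le fun α _ => hw3 α.1 α.2)
  · rw [map_sum, Finset.sum_congr rfl fun α _ => hw4 α.1 α.2]
    rw [Finset.sum_attach SX
      (fun α => rename Sum.inl (π α.degree (monomial α 1)) * rename Sum.inr (sliceX α g))]
    exact hgg'.symm

end Lift2

section MainThm

variable {σ τ : Type*}

lemma leadingForms_mono {υ : Type*} {J J' : Ideal (MvPolynomial υ ℚ)} (h : J ≤ J') :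
    leadingForms J ≤ leadingForms J' := by
  refine Ideal.span_mono ?_
  rintro g ⟨f, hf, h0, he⟩
  exact ⟨f, h hf, h0, he⟩

lemma main_ind {I : Ideal (MvPolynomial σ ℚ)} {I' : Ideal (MvPolynomial τ ℚ)}
    (D : ℕ) (p q : MvPolynomial (σ ⊕ τ) ℚ)
    (hp : p ∈ Ideal.map (rename (Sum.inl : σ → σ ⊕ τ)).toRingHom I)
    (hq : q ∈ Ideal.map (rename (Sum.inr : τ → σ ⊕ τ)).toRingHom I')
    (hdp : p.totalDegree ≤ D) (hdq : q.totalDegree ≤ D) :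
    homogeneousComponent (p + q).totalDegree (p + q) ∈
      leadingForms (Ideal.map (rename (Sum.inl : σ → σ ⊕ τ)).toRingHom I)
        ⊔ leadingForms (Ideal.map (rename (Sum.inr : τ → σ ⊕ τ)).toRingHom I') := by
  induction D using Nat.strongRecOn generalizing p q with
  | ind D ih =>
    by_cases hD : (p + q).totalDegree = D
    · rw [hD, map_add]
      exact Submodule.add_mem_sup (homogeneousComponent_mem_leadingForms hp hdp)
        (homogeneousComponent_mem_leadingForms_inr hq hdq)
    · have hflt : (p + q).totalDegree < D :=
        lt_of_le_of_ne ((totalDegree_add p q).trans (max_le hdp hdq)) hD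
      have hD1 : 1 ≤ D := by omega
      have hsum : homogeneousComponent D p + homogeneousComponent D q = 0 := by
        rw [← map_add]
        exact homogeneousComponent_eq_zero _ _ hflt
      obtain ⟨G, hG1, hG2, hG3, hG4⟩ := lift2 hp hq hdp hdq hsum
      have hpq : (p - G) + (q + G) = p + q := by ring
      have h1 : (p - G).totalDegree ≤ D - 1 :=
        totalDegree_le_pred hD1 ((totalDegree_sub p G).trans (max_le hdp hG3))
          (by rw [map_sub, hG4, sub_self])
      have h2 : (q + G).totalDegree ≤ D - 1 :=
        totalDegree_le_pred hD1 ((totalDegree_add q G).trans (max_le hdq hG3))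
          (by rw [map_add, hG4, add_comm]; exact hsum)
      have := ih (D - 1) (by omega) (p - G) (q + G)
        (Submodule.sub_mem _ hp hG1) (Submodule.add_mem _ hq hG2) h1 h2
      rwa [hpq] at this

theorem leadingForms_sup_map (I : Ideal (MvPolynomial σ ℚ)) (I' : Ideal (MvPolynomial τ ℚ)) :
    leadingForms (Ideal.map (rename (Sum.inl : σ → σ ⊕ τ)).toRingHom I
        ⊔ Ideal.map (rename (Sum.inr : τ → σ ⊕ τ)).toRingHom I')
      = leadingForms (Ideal.map (rename (Sum.inl : σ → σ ⊕ τ)).toRingHom I)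
        ⊔ leadingForms (Ideal.map (rename (Sum.inr : τ → σ ⊕ τ)).toRingHom I') := by
  refine le_antisymm ?_
    (sup_le (leadingForms_mono le_sup_left) (leadingForms_mono le_sup_right))
  rw [leadingForms, Ideal.span_le]
  rintro g ⟨f, hf, h0, rfl⟩
  obtain ⟨p, hp, q, hq, rfl⟩ := Submodule.mem_sup.mp hf
  exact main_ind (max p.totalDegree q.totalDegree) p q hp hq
    (le_max_left _ _) (le_max_right _ _)

end MainThm

end LFAux

/-- `c k` is the value of the `k`-th elementary symmetric polynomial at `(1,2,…,n)`. -/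
noncomputable def cval (n k : ℕ) : ℚ :=
  eval (fun i : Fin n => ((i : ℕ) : ℚ) + 1) (esymm (Fin n) ℚ k)

/-- The ideal of `A = ℚ[x_1,…,x_n,y_1,…,y_m]` generated by
`e_k(x_1,…,x_n) - e_k(1,…,n)`, `1 ≤ k ≤ n`. -/
noncomputable def xIdeal (n m : ℕ) : Ideal (MvPolynomial (Fin n ⊕ Fin m) ℚ) :=
  Ideal.span (Set.range (fun k : Fin n =>
    rename Sum.inl (esymm (Fin n) ℚ ((k : ℕ) + 1)) - C (cval n ((k : ℕ) + 1))))

/-- The ideal of `A = ℚ[x_1,…,x_n,y_1,…,y_m]` generated by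
`e_k(y_1,…,y_m) - e_k(1,…,m)`, `1 ≤ k ≤ m`. -/
noncomputable def yIdeal (n m : ℕ) : Ideal (MvPolynomial (Fin n ⊕ Fin m) ℚ) :=
  Ideal.span (Set.range (fun k : Fin m =>
    rename Sum.inr (esymm (Fin m) ℚ ((k : ℕ) + 1)) - C (cval m ((k : ℕ) + 1))))

/-- `(I + I')₀ = I₀ + I'₀` for the two vanishing ideals of permutation points. -/
theorem leadingForms_add (n m : ℕ) :
    leadingForms (xIdeal n m + yIdeal n m) =
      leadingForms (xIdeal n m) + leadingForms (yIdeal n m) := by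
  have hx : xIdeal n m = Ideal.map (rename (Sum.inl : Fin n → Fin n ⊕ Fin m)).toRingHom
      (Ideal.span (Set.range (fun k : Fin n =>
        esymm (Fin n) ℚ ((k : ℕ) + 1) - C (cval n ((k : ℕ) + 1))))) := by
    rw [Ideal.map_span, xIdeal, ← Set.range_comp]
    have h : (⇑(rename (Sum.inl : Fin n → Fin n ⊕ Fin m)).toRingHom ∘ fun k : Fin n =>
        esymm (Fin n) ℚ ((k : ℕ) + 1) - C (cval n ((k : ℕ) + 1)))
        = fun k : Fin n => rename Sum.inl (esymm (Fin n) ℚ ((k : ℕ) + 1))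
            - C (cval n ((k : ℕ) + 1)) := by
      funext k
      simp
    rw [h]
  have hy : yIdeal n m = Ideal.map (rename (Sum.inr : Fin m → Fin n ⊕ Fin m)).toRingHom
      (Ideal.span (Set.range (fun k : Fin m =>
        esymm (Fin m) ℚ ((k : ℕ) + 1) - C (cval m ((k : ℕ) + 1))))) := by
    rw [Ideal.map_span, yIdeal, ← Set.range_comp]
    have h : (⇑(rename (Sum.inr : Fin m → Fin n ⊕ Fin m)).toRingHom ∘ fun k : Fin m =>
        esymm (Fin m) ℚ ((k : ℕ) + 1) - C (cval m ((k : ℕ) + 1)))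
        = fun k : Fin m => rename Sum.inr (esymm (Fin m) ℚ ((k : ℕ) + 1))
            - C (cval m ((k : ℕ) + 1)) := by
      funext k
      simp
    rw [h]
  rw [hx, hy, Submodule.add_eq_sup, Submodule.add_eq_sup, LFAux.leadingForms_sup_map]
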